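/- Let n be a unit vector in R^3, T_w > 0, T_0 > 0, r_perp in (0,1], r_parallel in (0,2). Then ∫_{ {v ∈ R^3 : n·v < 0} } ( μ_{r_parallel,r_perp}(v) - μ_0(v) ) |n·v| dv = 0, where μ_0(v) = (1/(2π T_0^2)) e^{-|v|^2/(2T_0)} and μ_{r_parallel,r_perp}(v) = (1/(2π [T_0 (1-r_parallel)^2 + T_w r_parallel (2-r_parallel)])) · exp( -|v_parallel|^2 / (2 [T_0 (1-r_parallel)^2 + T_w r_parallel (2-r_parallel)]) ) · (1/(T_0 (1-r_perp) + T_w r_perp)) · exp( -|v_perp|^2 / (2 [T_0 (1-r_perp) + T_w r_perp]) ). -/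

import Mathlib

open MeasureTheory Real

/-- The global Maxwellian with temperature `T₀`:
`μ₀(v) = (1/(2πT₀²)) e^{-|v|²/(2T₀)}`. -/
noncomputable def maxwellian (T0 : ℝ) (v : EuclideanSpace ℝ (Fin 3)) : ℝ :=
  (1 / (2 * Real.pi * T0 ^ 2)) * Real.exp (-‖v‖ ^ 2 / (2 * T0))

/-- The wall Maxwellian `μ_{x,r_∥,r_⊥}` associated with the C-L boundary
condition. -/
noncomputable def CLwallMaxwellian (n : EuclideanSpace ℝ (Fin 3)) (T0 Tw rPerp rPar : ℝ)
    (v : EuclideanSpace ℝ (Fin 3)) : ℝ :=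
  (1 / (2 * Real.pi * (T0 * (1 - rPar) ^ 2 + Tw * rPar * (2 - rPar))))
    * Real.exp (-‖v - (inner ℝ n v : ℝ) • n‖ ^ 2
        / (2 * (T0 * (1 - rPar) ^ 2 + Tw * rPar * (2 - rPar))))
    * (1 / (T0 * (1 - rPerp) + Tw * rPerp))
    * Real.exp (-(inner ℝ n v : ℝ) ^ 2 / (2 * (T0 * (1 - rPerp) + Tw * rPerp)))

section Aux

open Set Filter



lemma real_integral_mul_exp_neg_mul_sq {b : ℝ} (hb : 0 < b) :
    ∫ r in Ioi (0:ℝ), r * Real.exp (-b * r ^ 2) = (2 * b)⁻¹ := by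
  have hderiv : ∀ x ∈ Ioi (0:ℝ),
      HasDerivAt (fun x : ℝ => -(2 * b)⁻¹ * Real.exp (-b * x ^ 2))
        (x * Real.exp (-b * x ^ 2)) x := by
    intro x _
    have h1 : HasDerivAt (fun x : ℝ => -b * x ^ 2) (-b * (2 * x)) x := by
      simpa using ((hasDerivAt_pow 2 x).const_mul (-b))
    have h2 := (h1.exp).const_mul (-(2 * b)⁻¹)
    refine h2.congr_deriv ?_
    have hb0 : (2 * b)⁻¹ * (2 * b) = 1 := inv_mul_cancel₀ (by positivity)
    linear_combination (x * Real.exp (-b * x ^ 2)) * hb0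
  have htend : Tendsto (fun x : ℝ => -(2 * b)⁻¹ * Real.exp (-b * x ^ 2)) atTop (nhds 0) := by
    have h1 : Tendsto (fun x : ℝ => -b * x ^ 2) atTop atBot := by
      exact Tendsto.const_mul_atTop_of_neg (by linarith : (-b) < 0) (tendsto_pow_atTop (by norm_num))
    have := (Real.tendsto_exp_atBot.comp h1).const_mul (-(2 * b)⁻¹)
    simpa using this
  have hcont : ContinuousOn (fun x : ℝ => -(2 * b)⁻¹ * Real.exp (-b * x ^ 2)) (Ici 0) :=
    (continuous_const.mul ((continuous_const.mul (continuous_pow 2)).rexp)).continuousOn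
  have hint : IntegrableOn (fun x : ℝ => x * Real.exp (-b * x ^ 2)) (Ioi 0) :=
    (integrable_mul_exp_neg_mul_sq hb).integrableOn
  have := integral_Ioi_of_hasDerivAt_of_tendsto (hcont.continuousWithinAt (self_mem_Ici)) hderiv hint htend
  rw [this]
  norm_num


lemma gauss_par (A : ℝ) (hA : 0 < A) :
    Integrable (fun t : ℝ => Real.exp (-t ^ 2 / (2 * A))) ∧
    (∫ t : ℝ, Real.exp (-t ^ 2 / (2 * A))) = Real.sqrt (2 * Real.pi * A) := by
  have h2A : 0 < (2 * A)⁻¹ := by positivity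
  have he : ∀ t : ℝ, -t ^ 2 / (2 * A) = -((2 * A)⁻¹) * t ^ 2 := by
    intro t; field_simp
  constructor
  · simp_rw [he]; exact integrable_exp_neg_mul_sq h2A
  · simp_rw [he]
    rw [integral_gaussian]
    congr 1
    field_simp

lemma gauss_perp (B c : ℝ) (hB : 0 < B) :
    Integrable (fun t : ℝ => if t < 0 then c * Real.exp (-t ^ 2 / (2 * B)) * |t| else 0) ∧
    (∫ t : ℝ, (if t < 0 then c * Real.exp (-t ^ 2 / (2 * B)) * |t| else 0)) = c * B := by
  have h2B : 0 < (2 * B)⁻¹ := by positivity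
  have he : ∀ t : ℝ, -t ^ 2 / (2 * B) = -((2 * B)⁻¹) * t ^ 2 := by
    intro t; field_simp
  have hind : (fun t : ℝ => if t < 0 then c * Real.exp (-t ^ 2 / (2 * B)) * |t| else 0)
      = (Iio (0:ℝ)).indicator (fun t => c * Real.exp (-t ^ 2 / (2 * B)) * |t|) := by
    funext t; rw [Set.indicator_apply]; simp [mem_Iio]
  have hint : Integrable (fun t : ℝ => c * Real.exp (-t ^ 2 / (2 * B)) * |t|) := by
    have h1 : Integrable (fun t : ℝ => c * |t * Real.exp (-(2 * B)⁻¹ * t ^ 2)|) :=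
      ((integrable_mul_exp_neg_mul_sq h2B).abs).const_mul c
    refine h1.congr ?_
    filter_upwards with t
    rw [abs_mul, abs_of_pos (Real.exp_pos _), he t]
    ring
  constructor
  · rw [hind, integrable_indicator_iff measurableSet_Iio]
    exact hint.integrableOn
  · rw [hind, integral_indicator measurableSet_Iio,
      ← integral_Iic_eq_integral_Iio]
    have : ∀ t ∈ Iic (0:ℝ), c * Real.exp (-t ^ 2 / (2 * B)) * |t|
        = (fun s : ℝ => c * Real.exp (-s ^ 2 / (2 * B)) * s) (-t) := by
      intro t ht
      rw [abs_of_nonpos (mem_Iic.mp ht)]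
      simp only []
      rw [show (-t)^2 = t^2 by ring]
    rw [setIntegral_congr_fun measurableSet_Iic this,
      integral_comp_neg_Iic 0 (fun s : ℝ => c * Real.exp (-s ^ 2 / (2 * B)) * s)]
    simp only [neg_zero]
    have : ∀ t ∈ Ioi (0:ℝ), c * Real.exp (-t ^ 2 / (2 * B)) * t
        = c * (t * Real.exp (-((2 * B)⁻¹) * t ^ 2)) := by
      intro t _; rw [he t]; ring
    rw [setIntegral_congr_fun measurableSet_Ioi this, integral_const_mul,
      real_integral_mul_exp_neg_mul_sq h2B]
    field_simp

lemma flux_aux (n : EuclideanSpace ℝ (Fin 3)) (hn : ‖n‖ = 1) (A B c : ℝ)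
    (hA : 0 < A) (hB : 0 < B) :
    IntegrableOn (fun v : EuclideanSpace ℝ (Fin 3) =>
        c * Real.exp (-(‖v‖ ^ 2 - (inner ℝ n v : ℝ) ^ 2) / (2 * A))
          * Real.exp (-(inner ℝ n v : ℝ) ^ 2 / (2 * B)) * |(inner ℝ n v : ℝ)|)
      {v : EuclideanSpace ℝ (Fin 3) | (inner ℝ n v : ℝ) < 0} ∧
    (∫ v in {v : EuclideanSpace ℝ (Fin 3) | (inner ℝ n v : ℝ) < 0},
        c * Real.exp (-(‖v‖ ^ 2 - (inner ℝ n v : ℝ) ^ 2) / (2 * A))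
          * Real.exp (-(inner ℝ n v : ℝ) ^ 2 / (2 * B)) * |(inner ℝ n v : ℝ)|)
      = c * (2 * Real.pi * A) * B := by
  classical
  set e0 : EuclideanSpace ℝ (Fin 3) := EuclideanSpace.single 0 1 with he0
  have hne0 : ‖e0‖ = 1 := by
    rw [he0, EuclideanSpace.norm_single]; norm_num
  set R : EuclideanSpace ℝ (Fin 3) ≃ₗᵢ[ℝ] EuclideanSpace ℝ (Fin 3) :=
    Submodule.reflection (ℝ ∙ (n - e0))ᗮ with hRdef
  have hR : R n = e0 := Submodule.reflection_sub (by rw [hn, hne0])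
  have hinner : ∀ v, (inner ℝ n v : ℝ) = (R v) 0 := by
    intro v
    have h := R.inner_map_map n v
    rw [hR] at h
    rw [← h, he0, EuclideanSpace.inner_single_left]
    simp
  -- one dimensional factors
  set g1 : ℝ → ℝ := fun t => Real.exp (-t ^ 2 / (2 * A)) with hg1
  set g0 : ℝ → ℝ := fun t => if t < 0 then c * Real.exp (-t ^ 2 / (2 * B)) * |t| else 0
    with hg0
  set g : Fin 3 → ℝ → ℝ := ![g0, g1, g1] with hg
  -- pointwise identity
  have hpt : ∀ v : EuclideanSpace ℝ (Fin 3),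
      ({v : EuclideanSpace ℝ (Fin 3) | (inner ℝ n v : ℝ) < 0}.indicator
        (fun v => c * Real.exp (-(‖v‖ ^ 2 - (inner ℝ n v : ℝ) ^ 2) / (2 * A))
          * Real.exp (-(inner ℝ n v : ℝ) ^ 2 / (2 * B)) * |(inner ℝ n v : ℝ)|)) v
        = ∏ i, g i ((R v) i) := by
    intro v
    have hnorm : ‖v‖ ^ 2 = (R v 0) ^ 2 + (R v 1) ^ 2 + (R v 2) ^ 2 := by
      rw [← R.norm_map v, EuclideanSpace.norm_eq, Real.sq_sqrt (by positivity)]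
      simp [Fin.sum_univ_three, sq_abs]
    rw [Set.indicator_apply]
    simp only [Set.mem_setOf_eq, hinner v, hnorm, hg, Fin.prod_univ_three,
      Matrix.cons_val_zero, Matrix.cons_val_one, Matrix.head_cons, Matrix.cons_val_two,
      Matrix.tail_cons, hg0, hg1]
    by_cases h : R v 0 < 0
    · rw [if_pos h, if_pos h]
      rw [show -(R v 0 ^ 2 + R v 1 ^ 2 + R v 2 ^ 2 - R v 0 ^ 2) / (2 * A)
            = -R v 1 ^ 2 / (2 * A) + -R v 2 ^ 2 / (2 * A) by ring, Real.exp_add]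
      ring
    · rw [if_neg h, if_neg h]
      ring
  -- measurable embedding facts
  have hRemb : MeasurableEmbedding (⇑R) := R.toHomeomorph.measurableEmbedding
  have hRmp : MeasurePreserving (⇑R) := R.measurePreserving
  have hpsimp := (EuclideanSpace.volume_preserving_symm_measurableEquiv_toLp (Fin 3)).symm
  have hgint : ∀ i, Integrable (g i) := by
    intro i
    fin_cases i
    · simpa [hg] using (gauss_perp B c hB).1
    · simpa [hg] using (gauss_par A hA).1
    · simpa [hg] using (gauss_par A hA).1
  have hprod_pi : Integrable (fun x : Fin 3 → ℝ => ∏ i, g i (x i)) :=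
    Integrable.fin_nat_prod hgint
  have hprod_euc : Integrable (fun w : EuclideanSpace ℝ (Fin 3) => ∏ i, g i (w i)) := by
    have := (hpsimp.integrable_comp_emb
      (MeasurableEquiv.toLp 2 (Fin 3 → ℝ)).measurableEmbedding
      (g := fun w : EuclideanSpace ℝ (Fin 3) => ∏ i, g i (w i)))
    exact this.mp hprod_pi
  have hSmeas : MeasurableSet {v : EuclideanSpace ℝ (Fin 3) | (inner ℝ n v : ℝ) < 0} := by
    have : Continuous fun v : EuclideanSpace ℝ (Fin 3) => (inner ℝ n v : ℝ) :=
      continuous_const.inner continuous_id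
    exact measurableSet_lt this.measurable measurable_const
  have hindic : Integrable ({v : EuclideanSpace ℝ (Fin 3) | (inner ℝ n v : ℝ) < 0}.indicator
        (fun v => c * Real.exp (-(‖v‖ ^ 2 - (inner ℝ n v : ℝ) ^ 2) / (2 * A))
          * Real.exp (-(inner ℝ n v : ℝ) ^ 2 / (2 * B)) * |(inner ℝ n v : ℝ)|)) := by
    rw [show ({v : EuclideanSpace ℝ (Fin 3) | (inner ℝ n v : ℝ) < 0}.indicator
        (fun v => c * Real.exp (-(‖v‖ ^ 2 - (inner ℝ n v : ℝ) ^ 2) / (2 * A))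
          * Real.exp (-(inner ℝ n v : ℝ) ^ 2 / (2 * B)) * |(inner ℝ n v : ℝ)|))
        = (fun w : EuclideanSpace ℝ (Fin 3) => ∏ i, g i (w i)) ∘ ⇑R from funext hpt]
    exact (hRmp.integrable_comp_emb hRemb).mpr hprod_euc
  constructor
  · exact (integrable_indicator_iff hSmeas).mp hindic
  · rw [← integral_indicator hSmeas]
    calc ∫ v, ({v : EuclideanSpace ℝ (Fin 3) | (inner ℝ n v : ℝ) < 0}.indicator
        (fun v => c * Real.exp (-(‖v‖ ^ 2 - (inner ℝ n v : ℝ) ^ 2) / (2 * A))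
          * Real.exp (-(inner ℝ n v : ℝ) ^ 2 / (2 * B)) * |(inner ℝ n v : ℝ)|)) v
        = ∫ v, (fun w : EuclideanSpace ℝ (Fin 3) => ∏ i, g i (w i)) (R v) := by
          exact integral_congr_ae (Filter.Eventually.of_forall hpt)
      _ = ∫ w : EuclideanSpace ℝ (Fin 3), ∏ i, g i (w i) :=
          hRmp.integral_comp hRemb (fun w : EuclideanSpace ℝ (Fin 3) => ∏ i, g i (w i))
      _ = ∫ x : Fin 3 → ℝ, ∏ i, g i (x i) :=
          (hpsimp.integral_comp' (fun w : EuclideanSpace ℝ (Fin 3) => ∏ i, g i (w i))).symm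
      _ = ∏ i, ∫ t : ℝ, g i t := MeasureTheory.integral_fintype_prod_eq_prod (ι := Fin 3) g
      _ = c * (2 * Real.pi * A) * B := by
          rw [Fin.prod_univ_three]
          simp only [hg, Matrix.cons_val_zero, Matrix.cons_val_one, Matrix.head_cons,
            Matrix.cons_val_two, Matrix.tail_cons]
          rw [(gauss_perp B c hB).2, (gauss_par A hA).2, mul_assoc,
            Real.mul_self_sqrt (by positivity)]
          ring

end Aux

/-- The incoming flux of the difference between the wall Maxwellian and the
global Maxwellian vanishes: `∫_{n·v<0} (μ_{r_∥,r_⊥}(v) - μ₀(v)) |n·v| dv = 0`. -/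
theorem CL_wallMaxwellian_sub_maxwellian_flux_zero
    (n : EuclideanSpace ℝ (Fin 3)) (hn : ‖n‖ = 1)
    (Tw T0 : ℝ) (hTw : 0 < Tw) (hT0 : 0 < T0) (rPerp rPar : ℝ)
    (hrPerp : 0 < rPerp) (hrPerp' : rPerp ≤ 1)
    (hrPar : 0 < rPar) (hrPar' : rPar < 2) :
    ∫ v in {v : EuclideanSpace ℝ (Fin 3) | (inner ℝ n v : ℝ) < 0},
        (CLwallMaxwellian n T0 Tw rPerp rPar v - maxwellian T0 v)
          * |(inner ℝ n v : ℝ)| = 0 := by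
  have hTp : 0 < T0 * (1 - rPar) ^ 2 + Tw * rPar * (2 - rPar) := by
    have h1 : 0 ≤ T0 * (1 - rPar) ^ 2 := by positivity
    have h2 : 0 < Tw * rPar * (2 - rPar) := by
      apply mul_pos (mul_pos hTw hrPar); linarith
    linarith
  have hTq : 0 < T0 * (1 - rPerp) + Tw * rPerp := by nlinarith
  obtain ⟨hi1, hv1⟩ := flux_aux n hn
    (T0 * (1 - rPar) ^ 2 + Tw * rPar * (2 - rPar)) (T0 * (1 - rPerp) + Tw * rPerp)
    ((1 / (2 * Real.pi * (T0 * (1 - rPar) ^ 2 + Tw * rPar * (2 - rPar))))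
      * (1 / (T0 * (1 - rPerp) + Tw * rPerp))) hTp hTq
  obtain ⟨hi2, hv2⟩ := flux_aux n hn T0 T0 (1 / (2 * Real.pi * T0 ^ 2)) hT0 hT0
  have hperp : ∀ v : EuclideanSpace ℝ (Fin 3),
      ‖v - (inner ℝ n v : ℝ) • n‖ ^ 2 = ‖v‖ ^ 2 - (inner ℝ n v : ℝ) ^ 2 := by
    intro v
    have h1 : (inner ℝ v ((inner ℝ n v : ℝ) • n) : ℝ) = (inner ℝ n v : ℝ) ^ 2 := by
      rw [real_inner_smul_right, real_inner_comm]; ring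
    have h2 : ‖(inner ℝ n v : ℝ) • n‖ ^ 2 = (inner ℝ n v : ℝ) ^ 2 := by
      rw [norm_smul, hn, Real.norm_eq_abs]
      rw [mul_one, sq_abs]
    rw [norm_sub_sq_real, h1, h2]; ring
  have key : ∀ v : EuclideanSpace ℝ (Fin 3),
      (CLwallMaxwellian n T0 Tw rPerp rPar v - maxwellian T0 v) * |(inner ℝ n v : ℝ)|
      = ((1 / (2 * Real.pi * (T0 * (1 - rPar) ^ 2 + Tw * rPar * (2 - rPar))))
            * (1 / (T0 * (1 - rPerp) + Tw * rPerp)))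
          * Real.exp (-(‖v‖ ^ 2 - (inner ℝ n v : ℝ) ^ 2)
              / (2 * (T0 * (1 - rPar) ^ 2 + Tw * rPar * (2 - rPar))))
          * Real.exp (-(inner ℝ n v : ℝ) ^ 2 / (2 * (T0 * (1 - rPerp) + Tw * rPerp)))
          * |(inner ℝ n v : ℝ)|
        - (1 / (2 * Real.pi * T0 ^ 2))
          * Real.exp (-(‖v‖ ^ 2 - (inner ℝ n v : ℝ) ^ 2) / (2 * T0))
          * Real.exp (-(inner ℝ n v : ℝ) ^ 2 / (2 * T0))
          * |(inner ℝ n v : ℝ)| := by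
    intro v
    have hexp : Real.exp (-(‖v‖ ^ 2 - (inner ℝ n v : ℝ) ^ 2) / (2 * T0))
        * Real.exp (-(inner ℝ n v : ℝ) ^ 2 / (2 * T0))
        = Real.exp (-‖v‖ ^ 2 / (2 * T0)) := by
      rw [← Real.exp_add]; congr 1; ring
    simp only [CLwallMaxwellian, maxwellian, hperp v]
    rw [← hexp]
    ring
  rw [MeasureTheory.integral_congr_ae (Filter.Eventually.of_forall
    (fun v => key v)), MeasureTheory.integral_sub hi1 hi2, hv1, hv2]
  have hπ : Real.pi ≠ 0 := Real.pi_ne_zero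
  have hTp' : T0 * (1 - rPar) ^ 2 + rPar * Tw * (2 - rPar) ≠ 0 := (by linarith : (0:ℝ) < T0 * (1 - rPar) ^ 2 + rPar * Tw * (2 - rPar)).ne'
  field_simp
  ring
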